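/- (Theorem 2, Convergence, stationarity of accumulation.) Suppose C > 0 and L is bounded below: B ≤ L x for all x ∈ E. Let θ, s : ℕ → E and η, ε : ℕ → ℝ satisfy, for all t: θ (t+1) = θ t − η t • s t; ‖s t − g (θ t)‖ ≤ ε t; 0 ≤ ε t ≤ ‖g (θ t)‖ / 4; and 0 ≤ η t ≤ 8 / (25 * C). If furthermore the step sizes are not summable (¬ Summable η, i.e., ∑ t, η t = ∞), then liminf_{t → ∞} ‖g (θ t)‖ = 0. -/

import Mathlib

open InnerProductSpace Set

local notation "⟪" x ", " y "⟫" => @inner ℝ _ _ x y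

lemma descent_lemma {E : Type*} [NormedAddCommGroup E] [InnerProductSpace ℝ E] [CompleteSpace E]
    (L : E → ℝ) (g : E → E) (hg : ∀ x : E, HasGradientAt L (g x) x)
    (C : NNReal) (hLip : LipschitzWith C g) (x v : E) :
    L (x + v) ≤ L x + ⟪g x, v⟫ + (C : ℝ) / 2 * ‖v‖ ^ 2 := by
  set φ : ℝ → ℝ := fun t => L (x + t • v) - t * ⟪g x, v⟫ - (C : ℝ) / 2 * ‖v‖ ^ 2 * t ^ 2 with hφ
  have hline : ∀ t : ℝ, HasDerivAt (fun t : ℝ => x + t • v) v t := by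
    intro t
    simpa using ((hasDerivAt_id t).smul_const v).const_add x
  have hf : ∀ t : ℝ, HasDerivAt (fun t : ℝ => L (x + t • v)) ⟪g (x + t • v), v⟫ t := by
    intro t
    have := (hg (x + t • v)).hasFDerivAt.comp_hasDerivAt t (hline t)
    simp at this
    exact this
  have hφ' : ∀ t : ℝ, HasDerivAt φ
      (⟪g (x + t • v), v⟫ - ⟪g x, v⟫ - (C : ℝ) * ‖v‖ ^ 2 * t) t := by
    intro t
    have h1 := ((hf t).sub ((hasDerivAt_id t).mul_const ⟪g x, v⟫)).sub
      (((hasDerivAt_pow 2 t).const_mul ((C : ℝ) / 2 * ‖v‖ ^ 2)))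
    convert h1 using 1
    · rfl
    · rfl
    · rfl
    · rw [show (2:ℕ) - 1 = 1 from rfl, pow_one]; push_cast; ring
  have hanti : AntitoneOn φ (Icc (0:ℝ) 1) := by
    apply antitoneOn_of_deriv_nonpos (convex_Icc 0 1)
    · exact fun t _ => (hφ' t).differentiableAt.continuousAt.continuousWithinAt
    · intro t ht
      exact (hφ' t).differentiableAt.differentiableWithinAt
    · intro t ht
      rw [(hφ' t).deriv, show ⟪g (x + t • v), v⟫ - ⟪g x, v⟫ = ⟪g (x + t • v) - g x, v⟫
        from (inner_sub_left _ _ _).symm]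
      rw [interior_Icc] at ht
      have ht0 : 0 < t := ht.1
      have hcs : ⟪g (x + t • v) - g x, v⟫ ≤ ‖g (x + t • v) - g x‖ * ‖v‖ :=
        real_inner_le_norm _ _
      have hl : ‖g (x + t • v) - g x‖ ≤ (C : ℝ) * (t * ‖v‖) := by
        have := hLip.dist_le_mul (x + t • v) x
        simp only [dist_eq_norm] at this
        calc ‖g (x + t • v) - g x‖ ≤ (C : ℝ) * ‖x + t • v - x‖ := this
        _ = (C : ℝ) * (t * ‖v‖) := by
              rw [add_sub_cancel_left, norm_smul, Real.norm_eq_abs, abs_of_pos ht0]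
      nlinarith [norm_nonneg v, norm_nonneg (g (x + t • v) - g x)]
  have := hanti (Set.left_mem_Icc.mpr zero_le_one) (Set.right_mem_Icc.mpr zero_le_one) zero_le_one
  simp only [hφ, zero_smul, add_zero, one_smul, zero_mul, one_pow, mul_one, zero_pow, mul_zero, sub_zero] at this
  linarith

open Filter Set in
/-- Theorem 2, Convergence, stationarity of accumulation:
with non-summable step sizes, the gradient norms have liminf zero. -/
theorem surrogate_gradient_liminf_zero
    {E : Type*} [NormedAddCommGroup E] [InnerProductSpace ℝ E] [CompleteSpace E]
    (L : E → ℝ) (g : E → E) (hg : ∀ x : E, HasGradientAt L (g x) x)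
    (C : NNReal) (hLip : LipschitzWith C g) (hC : 0 < (C : ℝ))
    (B : ℝ) (hB : ∀ x : E, B ≤ L x)
    (θ s : ℕ → E) (η ε : ℕ → ℝ)
    (hθ : ∀ t : ℕ, θ (t + 1) = θ t - η t • s t)
    (hs : ∀ t : ℕ, ‖s t - g (θ t)‖ ≤ ε t)
    (hε0 : ∀ t : ℕ, 0 ≤ ε t) (hε : ∀ t : ℕ, ε t ≤ ‖g (θ t)‖ / 4)
    (hη0 : ∀ t : ℕ, 0 ≤ η t) (hη : ∀ t : ℕ, η t ≤ 8 / (25 * (C : ℝ)))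
    (hdiv : ¬ Summable η) :
    Filter.liminf (fun t : ℕ => ‖g (θ t)‖) Filter.atTop = 0 := by
  -- per-step decrease
  have key : ∀ t : ℕ, L (θ (t + 1)) ≤ L (θ t) - η t / 2 * ‖g (θ t)‖ ^ 2 := by
    intro t
    have hstep : θ (t + 1) = θ t + (-(η t • s t)) := by rw [hθ t]; abel
    have hd := descent_lemma L g hg C hLip (θ t) (-(η t • s t))
    rw [← hstep] at hd
    set G := g (θ t) with hG
    have h1 : inner ℝ G (-(η t • s t)) = -(η t * inner ℝ G (s t) : ℝ) := by
      rw [inner_neg_right, inner_smul_right]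
    have h2 : (inner ℝ G (s t) : ℝ) ≥ 3 / 4 * ‖G‖ ^ 2 := by
      have e1 : (inner ℝ G (s t) : ℝ) = ‖G‖ ^ 2 + inner ℝ G (s t - G) := by
        rw [inner_sub_right, real_inner_self_eq_norm_sq]; ring
      have e2 : |(inner ℝ G (s t - G) : ℝ)| ≤ ‖G‖ * ‖s t - G‖ := abs_real_inner_le_norm _ _
      have e3 : ‖s t - G‖ ≤ ‖G‖ / 4 := le_trans (hs t) (hε t)
      have := neg_abs_le (inner ℝ G (s t - G) : ℝ)
      nlinarith [norm_nonneg G, norm_nonneg (s t - G)]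
    have h3 : ‖s t‖ ≤ 5 / 4 * ‖G‖ := by
      have := norm_sub_norm_le (s t) G
      have e3 : ‖s t - G‖ ≤ ‖G‖ / 4 := le_trans (hs t) (hε t)
      linarith
    have h4 : ‖-(η t • s t)‖ ^ 2 = η t ^ 2 * ‖s t‖ ^ 2 := by
      rw [norm_neg, norm_smul, Real.norm_eq_abs, mul_pow, sq_abs]
    have hηC : η t * (C : ℝ) ≤ 8 / 25 := by
      have h := hη t
      rw [le_div_iff₀ (by positivity : (0:ℝ) < 25 * (C : ℝ))] at h
      nlinarith
    rw [h1, h4] at hd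
    have h5 : (C : ℝ) / 2 * (η t ^ 2 * ‖s t‖ ^ 2) ≤ η t / 4 * ‖G‖ ^ 2 := by
      have hs2 : ‖s t‖ ^ 2 ≤ 25 / 16 * ‖G‖ ^ 2 := by
        nlinarith [norm_nonneg (s t), norm_nonneg G]
      have e1 := mul_le_mul_of_nonneg_left hs2
        (mul_nonneg (by positivity : (0:ℝ) ≤ (C : ℝ) / 2) (sq_nonneg (η t)))
      have e2 := mul_le_mul_of_nonneg_right hηC
        (mul_nonneg (hη0 t) (sq_nonneg ‖G‖))
      nlinarith [e1, e2]
    nlinarith [mul_le_mul_of_nonneg_left h2 (hη0 t)]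
  -- telescoping bound
  have sum_le : ∀ n : ℕ, ∑ t ∈ Finset.range n, η t / 2 * ‖g (θ t)‖ ^ 2 ≤ L (θ 0) - B := by
    intro n
    have tel : ∀ n : ℕ, L (θ n) + ∑ t ∈ Finset.range n, η t / 2 * ‖g (θ t)‖ ^ 2 ≤ L (θ 0) := by
      intro n
      induction n with
      | zero => simp
      | succ n ih =>
        rw [Finset.sum_range_succ]
        have := key n
        linarith
    have := tel n
    have := hB (θ n)
    linarith
  -- liminf computation
  rw [Filter.liminf_eq]
  have hset : {a : ℝ | ∀ᶠ t in atTop, a ≤ ‖g (θ t)‖} = Iic 0 := by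
    ext a
    simp only [mem_setOf_eq, mem_Iic]
    constructor
    · intro ha
      by_contra hpos
      push_neg at hpos
      obtain ⟨N, hN⟩ := eventually_atTop.mp ha
      apply hdiv
      rw [← summable_nat_add_iff N]
      apply summable_of_sum_range_le (fun t => hη0 (t + N))
      intro n
      have hb : ∀ m ∈ Finset.range n, η (m + N) ≤ 2 / a ^ 2 * (η (m + N) / 2 * ‖g (θ (m + N))‖ ^ 2) := by
        intro m _
        have h1 : a ≤ ‖g (θ (m + N))‖ := hN (m + N) (Nat.le_add_left N m)
        have ha2 : 0 < a ^ 2 := by positivity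
        have h2 : a ^ 2 ≤ ‖g (θ (m + N))‖ ^ 2 := by nlinarith
        have hη' := hη0 (m + N)
        calc η (m + N) = 2 / a ^ 2 * (η (m + N) / 2 * a ^ 2) := by field_simp
          _ ≤ 2 / a ^ 2 * (η (m + N) / 2 * ‖g (θ (m + N))‖ ^ 2) := by
              apply mul_le_mul_of_nonneg_left _ (by positivity)
              apply mul_le_mul_of_nonneg_left h2 (by positivity)
      calc ∑ t ∈ Finset.range n, η (t + N)
          ≤ ∑ t ∈ Finset.range n, 2 / a ^ 2 * (η (t + N) / 2 * ‖g (θ (t + N))‖ ^ 2) :=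
            Finset.sum_le_sum hb
        _ = 2 / a ^ 2 * ∑ t ∈ Finset.range n, η (t + N) / 2 * ‖g (θ (t + N))‖ ^ 2 := by
            rw [Finset.mul_sum]
        _ ≤ 2 / a ^ 2 * (L (θ 0) - B) := by
            apply mul_le_mul_of_nonneg_left _ (by positivity)
            have h := sum_le (N + n)
            rw [Finset.sum_range_add (fun t => η t / 2 * ‖g (θ t)‖ ^ 2) N n] at h
            have hpos : 0 ≤ ∑ t ∈ Finset.range N, η t / 2 * ‖g (θ t)‖ ^ 2 :=
              Finset.sum_nonneg fun t _ => by
                have := hη0 t; positivity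
            have heq : ∑ t ∈ Finset.range n, η (t + N) / 2 * ‖g (θ (t + N))‖ ^ 2
                = ∑ t ∈ Finset.range n, η (N + t) / 2 * ‖g (θ (N + t))‖ ^ 2 :=
              Finset.sum_congr rfl fun t _ => by rw [add_comm]
            rw [heq]
            linarith
    · intro ha
      exact Filter.Eventually.of_forall fun t => le_trans ha (norm_nonneg _)
  rw [hset, csSup_Iic]
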